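/- arXiv:2409.07142 — 7 statements merged into one kernel-verified Lean document; each statement's English description precedes it below -/
import Mathlib

section
/- Let δ ∈ [0, 1/2]. Let f be a randomized learning-augmented mechanism for two agents on the line that receives a profile x = (x₁,x₂) ∈ ℝ² together with a prediction x̂ = (x̂₁,x̂₂) ∈ ℝ² of the two agents' locations, is anonymous (f((x₁,x₂),(x̂₁,x̂₂)) = f((x₂,x₁),(x̂₂,x̂₁))), and is truthful in expectation for every fixed prediction. If f is (1+δ)-consistent, i.e. C(f(x,x),x) ≤ (1+δ)·opt(x) for every profile x, then f cannot be better than (2−δ)-robust: there exist a profile x with opt(x) > 0 and a prediction x̂ ∈ ℝ² such that C(f(x,x̂),x) ≥ (2−δ)·opt(x). -/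
open MeasureTheory

/-- lower bound on the robustness of any `(1+δ)`-consistent randomized
truthful-in-expectation learning-augmented mechanism for two agents on the line,
augmented with a prediction of both agents' locations. -/
theorem stmt0
    (δ : ℝ) (hδ : δ ∈ Set.Icc (0 : ℝ) (1 / 2))
    (f : ℝ × ℝ → ℝ × ℝ → Measure ℝ)
    (hprob : ∀ x p, IsProbabilityMeasure (f x p))
    (hmom : ∀ x p, Integrable (fun y => |y|) (f x p))
    (hanon : ∀ x₁ x₂ p₁ p₂ : ℝ, f (x₁, x₂) (p₁, p₂) = f (x₂, x₁) (p₂, p₁))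
    (htruth1 : ∀ (p : ℝ × ℝ) (x₁ x₂ x₁' : ℝ),
      ∫ y, |y - x₁| ∂(f (x₁, x₂) p) ≤ ∫ y, |y - x₁| ∂(f (x₁', x₂) p))
    (htruth2 : ∀ (p : ℝ × ℝ) (x₁ x₂ x₂' : ℝ),
      ∫ y, |y - x₂| ∂(f (x₁, x₂) p) ≤ ∫ y, |y - x₂| ∂(f (x₁, x₂') p))
    (hcons : ∀ x : ℝ × ℝ,
      ∫ y, max |y - x.1| |y - x.2| ∂(f x x) ≤ (1 + δ) * (|x.1 - x.2| / 2)) :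
    ∃ x p : ℝ × ℝ, 0 < |x.1 - x.2| / 2 ∧
      (2 - δ) * (|x.1 - x.2| / 2) ≤ ∫ y, max |y - x.1| |y - x.2| ∂(f x p) := by
  -- basic integrability facts
  have habs : ∀ y c : ℝ, |y - c| ≤ |y| + |c| := by
    intro y c
    rw [sub_eq_add_neg]
    exact (abs_add_le _ _).trans (by rw [abs_neg])
  have key : ∀ (x p : ℝ × ℝ) (c : ℝ), Integrable (fun y => |y - c|) (f x p) := by
    intro x p c
    refine ((hmom x p).add (integrable_const |c|)).mono
      ((continuous_id.sub continuous_const).abs.aestronglyMeasurable) ?_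
    filter_upwards with y
    rw [Real.norm_eq_abs, Real.norm_eq_abs, abs_abs]
    exact (habs y c).trans (le_abs_self _)
  have keymax : ∀ (x p : ℝ × ℝ) (a b : ℝ),
      Integrable (fun y => max |y - a| |y - b|) (f x p) := by
    intro x p a b
    refine ((key x p a).add (key x p b)).mono
      (((continuous_id.sub continuous_const).abs.max
        ((continuous_id.sub continuous_const).abs)).aestronglyMeasurable) ?_
    filter_upwards with y
    rw [Real.norm_eq_abs, Real.norm_eq_abs]
    rw [abs_of_nonneg (le_max_of_le_left (abs_nonneg _))]
    refine (max_le (le_add_of_nonneg_right (abs_nonneg _))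
      (le_add_of_nonneg_left (abs_nonneg _))).trans (le_abs_self _)
  have hPc : ∀ (x p : ℝ × ℝ) (c : ℝ), ∫ (_ : ℝ), c ∂(f x p) = c := by
    intro x p c
    haveI := hprob x p
    simp
  -- Step 1: consistency at profile (0,1) with prediction (0,1)
  have h0 := hcons ((0 : ℝ), (1 : ℝ))
  have hA : (∫ y, |y - (1/2 : ℝ)| ∂(f (0, 1) (0, 1))) + 1/2 ≤ (1 + δ) * (1 / 2) := by
    have hmono : ∫ y, (|y - (1/2 : ℝ)| + 1/2) ∂(f (0, 1) (0, 1))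
        ≤ ∫ y, max |y - ((0 : ℝ), (1 : ℝ)).1| |y - ((0 : ℝ), (1 : ℝ)).2|
            ∂(f (0, 1) (0, 1)) := by
      refine integral_mono ((key _ _ _).add (integrable_const _)) (keymax _ _ _ _) ?_
      intro y
      show |y - (1/2 : ℝ)| + 1/2 ≤ max |y - 0| |y - 1|
      rcases le_total y (1/2 : ℝ) with h | h
      · refine le_max_of_le_right ?_
        rw [abs_of_nonpos (by linarith : y - (1/2 : ℝ) ≤ 0),
          abs_of_nonpos (by linarith : y - (1 : ℝ) ≤ 0)]
        linarith
      · refine le_max_of_le_left ?_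
        rw [sub_zero, abs_of_nonneg (by linarith : (0 : ℝ) ≤ y - 1/2)]
        have := le_abs_self y
        linarith
    rw [integral_add (key _ _ _) (integrable_const _), hPc] at hmono
    refine hmono.trans (h0.trans_eq ?_)
    norm_num
  -- Step 2: truthfulness of agent 1 at profile (1/2, 1), misreport 0
  have hB : ∫ y, |y - (1/2 : ℝ)| ∂(f (1/2, 1) (0, 1))
      ≤ ∫ y, |y - (1/2 : ℝ)| ∂(f (0, 1) (0, 1)) :=
    htruth1 ((0 : ℝ), (1 : ℝ)) (1/2) 1 0
  -- Step 3: the measure at (1/2,1) is far from 1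
  have hC : (1/2 : ℝ) - (∫ y, |y - (1/2 : ℝ)| ∂(f (1/2, 1) (0, 1)))
      ≤ ∫ y, |y - (1 : ℝ)| ∂(f (1/2, 1) (0, 1)) := by
    have hmono : ∫ y, ((1/2 : ℝ) - |y - (1/2 : ℝ)|) ∂(f (1/2, 1) (0, 1))
        ≤ ∫ y, |y - (1 : ℝ)| ∂(f (1/2, 1) (0, 1)) := by
      refine integral_mono ((integrable_const _).sub (key _ _ _)) (key _ _ _) ?_
      intro y
      have h1 : (1 : ℝ) - y ≤ |y - 1| := by
        rw [abs_sub_comm]; exact le_abs_self _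
      have h2 : y - (1/2 : ℝ) ≤ |y - (1/2 : ℝ)| := le_abs_self _
      show (1/2 : ℝ) - |y - (1/2 : ℝ)| ≤ |y - 1|
      linarith
    rw [integral_sub (integrable_const _) (key _ _ _), hPc] at hmono
    exact hmono
  -- Step 4: truthfulness of agent 2 at profile (1/2, 1), misreport 3/2
  have hD : ∫ y, |y - (1 : ℝ)| ∂(f (1/2, 1) (0, 1))
      ≤ ∫ y, |y - (1 : ℝ)| ∂(f (1/2, 3/2) (0, 1)) :=
    htruth2 ((0 : ℝ), (1 : ℝ)) (1/2) 1 (3/2)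
  -- Step 5: the cost at profile (1/2, 3/2)
  have hE : (∫ y, |y - (1 : ℝ)| ∂(f (1/2, 3/2) (0, 1))) + 1/2
      ≤ ∫ y, max |y - (1/2 : ℝ)| |y - (3/2 : ℝ)| ∂(f (1/2, 3/2) (0, 1)) := by
    have hmono : ∫ y, (|y - (1 : ℝ)| + 1/2) ∂(f (1/2, 3/2) (0, 1))
        ≤ ∫ y, max |y - (1/2 : ℝ)| |y - (3/2 : ℝ)| ∂(f (1/2, 3/2) (0, 1)) := by
      refine integral_mono ((key _ _ _).add (integrable_const _)) (keymax _ _ _ _) ?_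
      intro y
      show |y - (1 : ℝ)| + 1/2 ≤ max |y - (1/2 : ℝ)| |y - (3/2 : ℝ)|
      rcases le_total y (1 : ℝ) with h | h
      · refine le_max_of_le_right ?_
        rw [abs_of_nonpos (by linarith : y - (1 : ℝ) ≤ 0),
          abs_of_nonpos (by linarith : y - (3/2 : ℝ) ≤ 0)]
        linarith
      · refine le_max_of_le_left ?_
        rw [abs_of_nonneg (by linarith : (0 : ℝ) ≤ y - 1),
          abs_of_nonneg (by linarith : (0 : ℝ) ≤ y - 1/2)]
        linarith
    rw [integral_add (key _ _ _) (integrable_const _), hPc] at hmono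
    exact hmono
  -- conclude with profile (1/2, 3/2) and prediction (0,1)
  refine ⟨((1/2 : ℝ), (3/2 : ℝ)), ((0 : ℝ), (1 : ℝ)), by norm_num, ?_⟩
  have hgoal : (2 - δ) * (|(1/2 : ℝ) - 3/2| / 2)
      ≤ ∫ y, max |y - (1/2 : ℝ)| |y - (3/2 : ℝ)| ∂(f (1/2, 3/2) (0, 1)) := by
    have h1 : |(1/2 : ℝ) - 3/2| = 1 := by norm_num
    rw [h1]
    linarith [hA, hB, hC, hD, hE]
  exact hgoal
end

section
/- Let f be a randomized mechanism for two agents on the line that is truthful in expectation. Then there exists a randomized mechanism f′ for two agents on the line that is truthful in expectation, is an OnlyM mechanism, and satisfies C(f′,x) = C(f,x) for every profile x; in particular, f′ achieves the same approximation guarantee as f on every instance. -/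
open MeasureTheory

/-- The expected egalitarian social cost of the randomized facility location `μ`
on the two-agent profile `x`. -/
noncomputable def egalCost (μ : Measure ℝ) (x : ℝ × ℝ) : ℝ :=
  ∫ y, max |y - x.1| |y - x.2| ∂μ

/-- A randomized mechanism for two agents on the line is truthful in expectation. -/
def TruthfulInExpectation (f : ℝ × ℝ → Measure ℝ) : Prop :=
  (∀ x₁ x₂ x₁' : ℝ,
    ∫ y, |y - x₁| ∂(f (x₁, x₂)) ≤ ∫ y, |y - x₁| ∂(f (x₁', x₂))) ∧
  (∀ x₁ x₂ x₂' : ℝ,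
    ∫ y, |y - x₂| ∂(f (x₁, x₂)) ≤ ∫ y, |y - x₂| ∂(f (x₁, x₂')))

/-- An OnlyM mechanism: with probability `1`, any returned location lying strictly
between the two reports equals the midpoint `M`. -/
def IsOnlyM (f : ℝ × ℝ → Measure ℝ) : Prop :=
  ∀ x : ℝ × ℝ,
    f x (Set.Ioo (min x.1 x.2) (max x.1 x.2) \ {(x.1 + x.2) / 2}) = 0

namespace Stmt1Aux

open Set
open scoped ENNReal

noncomputable def wL (L R y : ℝ) : ℝ := max 0 ((L + R - 2*y)/(R - L))
noncomputable def wR (L R y : ℝ) : ℝ := max 0 ((2*y - (L + R))/(R - L))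
noncomputable def wM (L R y : ℝ) : ℝ := 1 - wL L R y - wR L R y

lemma wL_nonneg (L R y : ℝ) : 0 ≤ wL L R y := le_max_left _ _
lemma wR_nonneg (L R y : ℝ) : 0 ≤ wR L R y := le_max_left _ _

lemma continuous_wL (L R : ℝ) : Continuous (wL L R) := by
  unfold wL; fun_prop

lemma continuous_wR (L R : ℝ) : Continuous (wR L R) := by
  unfold wR; fun_prop

lemma continuous_wM (L R : ℝ) : Continuous (wM L R) := by
  unfold wM
  exact (continuous_const.sub (continuous_wL L R)).sub (continuous_wR L R)

lemma sum_w (L R y : ℝ) : wL L R y + wM L R y + wR L R y = 1 := by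
  unfold wM; ring

lemma wL_val_le {L R y : ℝ} (hd : 0 < R - L) (h : 2*y ≤ L + R) :
    wL L R y = (L + R - 2*y)/(R - L) ∧ wR L R y = 0 := by
  constructor
  · exact max_eq_right (div_nonneg (by linarith) hd.le)
  · exact max_eq_left (div_nonpos_of_nonpos_of_nonneg (by linarith) hd.le)

lemma wR_val_ge {L R y : ℝ} (hd : 0 < R - L) (h : L + R ≤ 2*y) :
    wR L R y = (2*y - (L + R))/(R - L) ∧ wL L R y = 0 := by
  constructor
  · exact max_eq_right (div_nonneg (by linarith) hd.le)
  · exact max_eq_left (div_nonpos_of_nonpos_of_nonneg (by linarith) hd.le)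

lemma wL_le_one {L R y : ℝ} (hy : y ∈ Ioo L R) : wL L R y ≤ 1 := by
  have hd : 0 < R - L := by have := hy.1; have := hy.2; linarith
  unfold wL
  apply max_le (by norm_num)
  rw [div_le_one hd]; have := hy.1; linarith

lemma wR_le_one {L R y : ℝ} (hy : y ∈ Ioo L R) : wR L R y ≤ 1 := by
  have hd : 0 < R - L := by have := hy.1; have := hy.2; linarith
  unfold wR
  apply max_le (by norm_num)
  rw [div_le_one hd]; have := hy.2; linarith

lemma wM_nonneg {L R y : ℝ} (hy : y ∈ Ioo L R) : 0 ≤ wM L R y := by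
  have hd : 0 < R - L := by have := hy.1; have := hy.2; linarith
  have h1 := hy.1; have h2 := hy.2
  unfold wM
  rcases le_total (2*y) (L+R) with h | h
  · obtain ⟨e1, e2⟩ := wL_val_le hd h
    rw [e1, e2]
    have : (L + R - 2*y)/(R-L) ≤ 1 := by rw [div_le_one hd]; linarith
    linarith
  · obtain ⟨e1, e2⟩ := wR_val_ge hd h
    rw [e1, e2]
    have : (2*y - (L + R))/(R-L) ≤ 1 := by rw [div_le_one hd]; linarith
    linarith

lemma wM_le_one (L R y : ℝ) : wM L R y ≤ 1 := by
  unfold wM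
  have := wL_nonneg L R y; have := wR_nonneg L R y; linarith

lemma mean_w {L R y : ℝ} (hy : y ∈ Ioo L R) :
    wL L R y * L + wM L R y * ((L + R)/2) + wR L R y * R = y := by
  have hd : 0 < R - L := by have := hy.1; have := hy.2; linarith
  unfold wM
  rcases le_total (2*y) (L+R) with h | h
  · obtain ⟨e1, e2⟩ := wL_val_le hd h
    rw [e1, e2]
    field_simp
    ring
  · obtain ⟨e1, e2⟩ := wR_val_ge hd h
    rw [e1, e2]
    field_simp
    ring

lemma cost_w {L R y : ℝ} (hy : y ∈ Ioo L R) :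
    wL L R y * (R - L) + wM L R y * ((R - L)/2) + wR L R y * (R - L)
      = max (y - L) (R - y) := by
  have hd : 0 < R - L := by have := hy.1; have := hy.2; linarith
  have h1 := hy.1; have h2 := hy.2
  unfold wM
  rcases le_total (2*y) (L+R) with h | h
  · obtain ⟨e1, e2⟩ := wL_val_le hd h
    rw [e1, e2, max_eq_right (show y - L ≤ R - y by linarith)]
    field_simp
    ring
  · obtain ⟨e1, e2⟩ := wR_val_ge hd h
    rw [e1, e2, max_eq_left (show R - y ≤ y - L by linarith)]
    field_simp
    ring

lemma combo_key {L R y t : ℝ} (hy : y ∈ Ioo L R) :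
    wL L R y * (L - t) + wM L R y * ((L + R)/2 - t) + wR L R y * (R - t) = y - t := by
  have hs := sum_w L R y
  have hm := mean_w hy
  linear_combination hm - t * hs

lemma combo_ge {L R y : ℝ} (hy : y ∈ Ioo L R) (t : ℝ) :
    |y - t| ≤ wL L R y * |L - t| + wM L R y * |(L + R)/2 - t| + wR L R y * |R - t| := by
  have hk := combo_key (t := t) hy
  have h0L := wL_nonneg L R y
  have h0R := wR_nonneg L R y
  have h0M := wM_nonneg hy
  have a1 := mul_le_mul_of_nonneg_left (le_abs_self (L - t)) h0L
  have a2 := mul_le_mul_of_nonneg_left (le_abs_self ((L + R)/2 - t)) h0M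
  have a3 := mul_le_mul_of_nonneg_left (le_abs_self (R - t)) h0R
  have b1 := mul_le_mul_of_nonneg_left (neg_abs_le (L - t)) h0L
  have b2 := mul_le_mul_of_nonneg_left (neg_abs_le ((L + R)/2 - t)) h0M
  have b3 := mul_le_mul_of_nonneg_left (neg_abs_le (R - t)) h0R
  rw [abs_sub_le_iff]
  constructor
  · nlinarith
  · nlinarith

lemma combo_eq {L R y t : ℝ} (hy : y ∈ Ioo L R) (ht : t ≤ L ∨ R ≤ t) :
    wL L R y * |L - t| + wM L R y * |(L + R)/2 - t| + wR L R y * |R - t| = |y - t| := by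
  have hk := combo_key (t := t) hy
  have h1 := hy.1; have h2 := hy.2
  rcases ht with ht | ht
  · rw [abs_of_nonneg (by linarith : (0:ℝ) ≤ L - t),
      abs_of_nonneg (by linarith : (0:ℝ) ≤ (L + R)/2 - t),
      abs_of_nonneg (by linarith : (0:ℝ) ≤ R - t),
      abs_of_nonneg (by linarith : (0:ℝ) ≤ y - t)]
    exact hk
  · rw [abs_of_nonpos (by linarith : L - t ≤ 0),
      abs_of_nonpos (by linarith : (L + R)/2 - t ≤ 0),
      abs_of_nonpos (by linarith : R - t ≤ 0),
      abs_of_nonpos (by linarith : y - t ≤ 0)]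
    linear_combination -hk

/-- The combo identity for the egalitarian cost function. -/
lemma cost_combo {a b y : ℝ} (hy : y ∈ Ioo (min a b) (max a b)) :
    wL (min a b) (max a b) y * max |min a b - a| |min a b - b|
      + wM (min a b) (max a b) y * max |(min a b + max a b)/2 - a| |(min a b + max a b)/2 - b|
      + wR (min a b) (max a b) y * max |max a b - a| |max a b - b|
      = max |y - a| |y - b| := by
  set L := min a b with hLdef
  set R := max a b with hRdef
  have hLR : L < R := lt_trans hy.1 hy.2
  have hcomm : ∀ s : ℝ, max |s - a| |s - b| = max |s - L| |s - R| := by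
    intro s
    rcases le_total a b with h | h
    · rw [hLdef, hRdef, min_eq_left h, max_eq_right h]
    · rw [hLdef, hRdef, min_eq_right h, max_eq_left h, max_comm]
  rw [hcomm L, hcomm ((L+R)/2), hcomm R, hcomm y]
  have e1 : max |L - L| |L - R| = R - L := by
    rw [sub_self, abs_zero, abs_of_nonpos (by linarith)]
    rw [max_eq_right (by linarith)]
    ring
  have e2 : max |(L+R)/2 - L| |(L+R)/2 - R| = (R - L)/2 := by
    rw [abs_of_nonneg (by linarith), abs_of_nonpos (by linarith)]
    rw [max_eq_right (by linarith)]
    ring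
  have e3 : max |R - L| |R - R| = R - L := by
    rw [sub_self, abs_zero, abs_of_nonneg (by linarith)]
    rw [max_eq_left (by linarith)]
  have e4 : max |y - L| |y - R| = max (y - L) (R - y) := by
    rw [abs_of_nonneg (by linarith [hy.1]), abs_of_nonpos (by linarith [hy.2])]
    congr 1
    ring
  rw [e1, e2, e3, e4]
  exact cost_w hy

/-! ### The transformed measure -/

/-- The transformed (OnlyM) measure. -/
noncomputable def tfm (μ : Measure ℝ) (L R : ℝ) : Measure ℝ :=
  μ.restrict (Ioo L R)ᶜ
    + ENNReal.ofReal (∫ y in Ioo L R, wL L R y ∂μ) • Measure.dirac L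
    + ENNReal.ofReal (∫ y in Ioo L R, wM L R y ∂μ) • Measure.dirac ((L + R)/2)
    + ENNReal.ofReal (∫ y in Ioo L R, wR L R y ∂μ) • Measure.dirac R

lemma integrable_smul_dirac (φ : ℝ → ℝ) (hφ : Measurable φ) (c : ℝ≥0∞) (hc : c ≠ ⊤) (a : ℝ) :
    Integrable φ (c • Measure.dirac a) := by
  have h1 : Integrable φ (Measure.dirac a) :=
    (integrable_const (φ a)).congr (ae_eq_dirac' hφ).symm
  exact h1.smul_measure hc

lemma integral_smul_dirac (φ : ℝ → ℝ) (hφ : Measurable φ) (c : ℝ) (hc : 0 ≤ c) (a : ℝ) :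
    ∫ y, φ y ∂(ENNReal.ofReal c • Measure.dirac a) = c * φ a := by
  rw [integral_smul_measure, integral_dirac' φ a hφ.stronglyMeasurable,
    ENNReal.toReal_ofReal hc]
  rfl

lemma integrableOn_bdd {μ : Measure ℝ} [IsFiniteMeasure μ] {L R : ℝ} {w : ℝ → ℝ}
    (hw : Continuous w) (hb : ∀ y ∈ Ioo L R, |w y| ≤ 1) :
    IntegrableOn w (Ioo L R) μ := by
  apply Integrable.mono' (integrable_const (1:ℝ)) hw.aestronglyMeasurable
  filter_upwards [ae_restrict_mem measurableSet_Ioo] with y hy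
  simpa using hb y hy

lemma hwL' (μ : Measure ℝ) [IsFiniteMeasure μ] (L R : ℝ) :
    IntegrableOn (wL L R) (Ioo L R) μ :=
  integrableOn_bdd (continuous_wL L R)
    (fun y hy => abs_le.mpr ⟨by linarith [wL_nonneg L R y], wL_le_one hy⟩)

lemma hwR' (μ : Measure ℝ) [IsFiniteMeasure μ] (L R : ℝ) :
    IntegrableOn (wR L R) (Ioo L R) μ :=
  integrableOn_bdd (continuous_wR L R)
    (fun y hy => abs_le.mpr ⟨by linarith [wR_nonneg L R y], wR_le_one hy⟩)

lemma hwM' (μ : Measure ℝ) [IsFiniteMeasure μ] (L R : ℝ) :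
    IntegrableOn (wM L R) (Ioo L R) μ :=
  integrableOn_bdd (continuous_wM L R)
    (fun y hy => abs_le.mpr ⟨by linarith [wM_nonneg hy], wM_le_one L R y⟩)

lemma hnL' (μ : Measure ℝ) (L R : ℝ) : 0 ≤ ∫ y in Ioo L R, wL L R y ∂μ :=
  setIntegral_nonneg measurableSet_Ioo (fun y _ => wL_nonneg L R y)

lemma hnR' (μ : Measure ℝ) (L R : ℝ) : 0 ≤ ∫ y in Ioo L R, wR L R y ∂μ :=
  setIntegral_nonneg measurableSet_Ioo (fun y _ => wR_nonneg L R y)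

lemma hnM' (μ : Measure ℝ) (L R : ℝ) : 0 ≤ ∫ y in Ioo L R, wM L R y ∂μ :=
  setIntegral_nonneg measurableSet_Ioo (fun y hy => wM_nonneg hy)

lemma tfm_integral (μ : Measure ℝ) [IsFiniteMeasure μ] (L R : ℝ) (φ : ℝ → ℝ)
    (hφc : Continuous φ) (hφi : Integrable φ μ) :
    ∫ y, φ y ∂(tfm μ L R) = (∫ y in (Ioo L R)ᶜ, φ y ∂μ)
      + ∫ y in Ioo L R,
          (wL L R y * φ L + wM L R y * φ ((L+R)/2) + wR L R y * φ R) ∂μ := by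
  have hwL := hwL' μ L R
  have hwM := hwM' μ L R
  have hwR := hwR' μ L R
  have hφm : Measurable φ := hφc.measurable
  have i0 : Integrable φ (μ.restrict (Ioo L R)ᶜ) := hφi.restrict
  have i1 : Integrable φ (ENNReal.ofReal (∫ y in Ioo L R, wL L R y ∂μ) • Measure.dirac L) :=
    integrable_smul_dirac φ hφm _ ENNReal.ofReal_ne_top _
  have i2 : Integrable φ
      (ENNReal.ofReal (∫ y in Ioo L R, wM L R y ∂μ) • Measure.dirac ((L+R)/2)) :=
    integrable_smul_dirac φ hφm _ ENNReal.ofReal_ne_top _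
  have i3 : Integrable φ (ENNReal.ofReal (∫ y in Ioo L R, wR L R y ∂μ) • Measure.dirac R) :=
    integrable_smul_dirac φ hφm _ ENNReal.ofReal_ne_top _
  rw [tfm, integral_add_measure ((i0.add_measure i1).add_measure i2) i3,
    integral_add_measure (i0.add_measure i1) i2, integral_add_measure i0 i1,
    integral_smul_dirac φ hφm _ (hnL' μ L R), integral_smul_dirac φ hφm _ (hnM' μ L R),
    integral_smul_dirac φ hφm _ (hnR' μ L R)]
  have eL : (∫ y in Ioo L R, wL L R y ∂μ) * φ L = ∫ y in Ioo L R, wL L R y * φ L ∂μ :=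
    (integral_mul_const _ _).symm
  have eM : (∫ y in Ioo L R, wM L R y ∂μ) * φ ((L+R)/2)
      = ∫ y in Ioo L R, wM L R y * φ ((L+R)/2) ∂μ := (integral_mul_const _ _).symm
  have eR : (∫ y in Ioo L R, wR L R y ∂μ) * φ R = ∫ y in Ioo L R, wR L R y * φ R ∂μ :=
    (integral_mul_const _ _).symm
  have h3 := integral_add ((hwL.mul_const (φ L)).add (hwM.mul_const (φ ((L+R)/2))))
    (hwR.mul_const (φ R))
  have h4 := integral_add (hwL.mul_const (φ L)) (hwM.mul_const (φ ((L+R)/2)))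
  simp only [Pi.add_apply] at h3 h4
  rw [eL, eM, eR, h3, h4]
  ring

lemma combo_integrableOn (μ : Measure ℝ) [IsFiniteMeasure μ] (L R : ℝ) (cL cM cR : ℝ) :
    IntegrableOn
      (fun y => wL L R y * cL + wM L R y * cM + wR L R y * cR) (Ioo L R) μ := by
  have h := (((hwL' μ L R).mul_const cL).add ((hwM' μ L R).mul_const cM)).add
    ((hwR' μ L R).mul_const cR)
  exact h

lemma tfm_le (μ : Measure ℝ) [IsFiniteMeasure μ] (L R : ℝ) (φ : ℝ → ℝ)
    (hφc : Continuous φ) (hφi : Integrable φ μ)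
    (hpt : ∀ y ∈ Ioo L R,
      φ y ≤ wL L R y * φ L + wM L R y * φ ((L+R)/2) + wR L R y * φ R) :
    ∫ y, φ y ∂μ ≤ ∫ y, φ y ∂(tfm μ L R) := by
  rw [tfm_integral μ L R φ hφc hφi]
  have split : ∫ y, φ y ∂μ = (∫ y in (Ioo L R)ᶜ, φ y ∂μ) + ∫ y in Ioo L R, φ y ∂μ := by
    rw [add_comm, integral_add_compl measurableSet_Ioo hφi]
  rw [split]
  apply add_le_add le_rfl
  exact setIntegral_mono_on hφi.integrableOn (combo_integrableOn μ L R _ _ _)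
    measurableSet_Ioo hpt

lemma tfm_eq (μ : Measure ℝ) [IsFiniteMeasure μ] (L R : ℝ) (φ : ℝ → ℝ)
    (hφc : Continuous φ) (hφi : Integrable φ μ)
    (hpt : ∀ y ∈ Ioo L R,
      wL L R y * φ L + wM L R y * φ ((L+R)/2) + wR L R y * φ R = φ y) :
    ∫ y, φ y ∂(tfm μ L R) = ∫ y, φ y ∂μ := by
  rw [tfm_integral μ L R φ hφc hφi,
    setIntegral_congr_fun measurableSet_Ioo (fun y hy => hpt y hy),
    add_comm, integral_add_compl measurableSet_Ioo hφi]

lemma tfm_prob (μ : Measure ℝ) [IsProbabilityMeasure μ] (L R : ℝ) :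
    IsProbabilityMeasure (tfm μ L R) := by
  have hwL := hwL' μ L R
  have hwM := hwM' μ L R
  have hwR := hwR' μ L R
  constructor
  have hsum : (∫ y in Ioo L R, wL L R y ∂μ) + (∫ y in Ioo L R, wM L R y ∂μ)
      + (∫ y in Ioo L R, wR L R y ∂μ) = (μ (Ioo L R)).toReal := by
    have h3 := integral_add (hwL.add hwM) hwR
    have h4 := integral_add hwL hwM
    simp only [Pi.add_apply] at h3 h4
    rw [h4] at h3
    rw [← h3]
    have : ∀ y ∈ Ioo L R, wL L R y + wM L R y + wR L R y = (1:ℝ) := by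
      intro y _
      unfold wM; ring
    calc ∫ y in Ioo L R, (wL L R y + wM L R y + wR L R y) ∂μ
        = ∫ _ in Ioo L R, (1:ℝ) ∂μ := setIntegral_congr_fun measurableSet_Ioo this
      _ = (μ (Ioo L R)).toReal := by simp; rfl
  rw [tfm]
  simp only [Measure.add_apply, Measure.smul_apply, smul_eq_mul,
    Measure.dirac_apply_of_mem (Set.mem_univ _),
    Measure.restrict_apply MeasurableSet.univ, Set.univ_inter, mul_one]
  rw [add_assoc, add_assoc, ← ENNReal.ofReal_add (hnM' μ L R) (hnR' μ L R),
    ← ENNReal.ofReal_add (hnL' μ L R)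
      (add_nonneg (hnM' μ L R) (hnR' μ L R)),
    ← add_assoc, hsum, ENNReal.ofReal_toReal (measure_ne_top μ _)]
  rw [add_comm]
  rw [measure_add_measure_compl measurableSet_Ioo]
  exact measure_univ

lemma tfm_integrable_abs (μ : Measure ℝ) (L R : ℝ)
    (hint : Integrable (fun y => |y|) μ) :
    Integrable (fun y => |y|) (tfm μ L R) := by
  have hm : Measurable fun y : ℝ => |y| := continuous_abs.measurable
  exact ((hint.restrict.add_measure
    (integrable_smul_dirac _ hm _ ENNReal.ofReal_ne_top _)).add_measure
    (integrable_smul_dirac _ hm _ ENNReal.ofReal_ne_top _)).add_measure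
    (integrable_smul_dirac _ hm _ ENNReal.ofReal_ne_top _)

lemma tfm_between (μ : Measure ℝ) (L R : ℝ) :
    tfm μ L R (Ioo L R \ {(L + R)/2}) = 0 := by
  have hms : MeasurableSet (Ioo L R \ {(L + R)/2}) :=
    measurableSet_Ioo.diff (measurableSet_singleton _)
  have h0 : (Ioo L R \ {(L + R)/2}) ∩ (Ioo L R)ᶜ = ∅ := by
    apply Set.eq_empty_of_subset_empty
    intro y hy
    exact absurd hy.1.1 hy.2
  rw [tfm]
  simp only [Measure.add_apply, Measure.smul_apply, smul_eq_mul,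
    Measure.restrict_apply hms, h0, measure_empty,
    Measure.dirac_apply' _ hms]
  rw [Set.indicator_of_notMem (by simp), Set.indicator_of_notMem (by simp),
    Set.indicator_of_notMem (by simp)]
  simp

lemma integrable_abs_sub (μ : Measure ℝ) [IsFiniteMeasure μ]
    (h : Integrable (fun y => |y|) μ) (t : ℝ) :
    Integrable (fun y => |y - t|) μ := by
  apply Integrable.mono' (h.add (integrable_const |t|))
    ((continuous_id.sub continuous_const).abs.aestronglyMeasurable)
  filter_upwards with y
  rw [Real.norm_eq_abs, abs_abs]
  exact norm_sub_le y t

lemma integrable_cost (μ : Measure ℝ) [IsFiniteMeasure μ]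
    (h : Integrable (fun y => |y|) μ) (a b : ℝ) :
    Integrable (fun y => max |y - a| |y - b|) μ := by
  apply Integrable.mono' ((integrable_abs_sub μ h a).add (integrable_abs_sub μ h b))
    (((continuous_id.sub continuous_const).abs.max
      ((continuous_id.sub continuous_const).abs)).aestronglyMeasurable)
  filter_upwards with y
  rw [Real.norm_eq_abs, abs_of_nonneg (le_max_of_le_left (abs_nonneg _))]
  exact max_le (le_add_of_nonneg_right (abs_nonneg _)) (le_add_of_nonneg_left (abs_nonneg _))

end Stmt1Aux

open MeasureTheory

/-- any truthful-in-expectation randomized mechanism for two agents on the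
line can be converted to a truthful-in-expectation OnlyM mechanism with the same expected
egalitarian social cost on every profile. -/
theorem stmt1 (f : ℝ × ℝ → Measure ℝ)
    (hprob : ∀ x, IsProbabilityMeasure (f x))
    (hmom : ∀ x, Integrable (fun y => |y|) (f x))
    (htruth : TruthfulInExpectation f) :
    ∃ f' : ℝ × ℝ → Measure ℝ,
      (∀ x, IsProbabilityMeasure (f' x)) ∧
      (∀ x, Integrable (fun y => |y|) (f' x)) ∧
      TruthfulInExpectation f' ∧
      IsOnlyM f' ∧
      ∀ x, egalCost (f' x) x = egalCost (f x) x := by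
  classical
  refine ⟨fun x => Stmt1Aux.tfm (f x) (min x.1 x.2) (max x.1 x.2), ?_, ?_, ⟨?_, ?_⟩, ?_, ?_⟩
  · intro x
    haveI := hprob x
    exact Stmt1Aux.tfm_prob (f x) _ _
  · intro x
    exact Stmt1Aux.tfm_integrable_abs (f x) _ _ (hmom x)
  · intro x₁ x₂ x₁'
    haveI := hprob (x₁, x₂); haveI := hprob (x₁', x₂)
    have hc : Continuous fun y : ℝ => |y - x₁| := (continuous_id.sub continuous_const).abs
    have hi1 : Integrable (fun y => |y - x₁|) (f (x₁, x₂)) :=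
      Stmt1Aux.integrable_abs_sub _ (hmom _) _
    have hi2 : Integrable (fun y => |y - x₁|) (f (x₁', x₂)) :=
      Stmt1Aux.integrable_abs_sub _ (hmom _) _
    have hL : ∫ y, |y - x₁|
          ∂(Stmt1Aux.tfm (f (x₁, x₂)) (min x₁ x₂) (max x₁ x₂))
        = ∫ y, |y - x₁| ∂(f (x₁, x₂)) := by
      apply Stmt1Aux.tfm_eq _ _ _ _ hc hi1
      intro y hy
      apply Stmt1Aux.combo_eq hy
      rcases le_total x₁ x₂ with h | h
      · exact Or.inl (le_min le_rfl h)
      · exact Or.inr (max_le le_rfl h)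
    have hR : ∫ y, |y - x₁| ∂(f (x₁', x₂))
        ≤ ∫ y, |y - x₁| ∂(Stmt1Aux.tfm (f (x₁', x₂)) (min x₁' x₂) (max x₁' x₂)) :=
      Stmt1Aux.tfm_le _ _ _ _ hc hi2 (fun y hy => Stmt1Aux.combo_ge hy x₁)
    simp only []
    rw [hL]
    exact le_trans (htruth.1 x₁ x₂ x₁') hR
  · intro x₁ x₂ x₂'
    haveI := hprob (x₁, x₂); haveI := hprob (x₁, x₂')
    have hc : Continuous fun y : ℝ => |y - x₂| := (continuous_id.sub continuous_const).abs
    have hi1 : Integrable (fun y => |y - x₂|) (f (x₁, x₂)) :=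
      Stmt1Aux.integrable_abs_sub _ (hmom _) _
    have hi2 : Integrable (fun y => |y - x₂|) (f (x₁, x₂')) :=
      Stmt1Aux.integrable_abs_sub _ (hmom _) _
    have hL : ∫ y, |y - x₂|
          ∂(Stmt1Aux.tfm (f (x₁, x₂)) (min x₁ x₂) (max x₁ x₂))
        = ∫ y, |y - x₂| ∂(f (x₁, x₂)) := by
      apply Stmt1Aux.tfm_eq _ _ _ _ hc hi1
      intro y hy
      apply Stmt1Aux.combo_eq hy
      rcases le_total x₁ x₂ with h | h
      · exact Or.inr (max_le h le_rfl)
      · exact Or.inl (le_min h le_rfl)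
    have hR : ∫ y, |y - x₂| ∂(f (x₁, x₂'))
        ≤ ∫ y, |y - x₂| ∂(Stmt1Aux.tfm (f (x₁, x₂')) (min x₁ x₂') (max x₁ x₂')) :=
      Stmt1Aux.tfm_le _ _ _ _ hc hi2 (fun y hy => Stmt1Aux.combo_ge hy x₂)
    simp only []
    rw [hL]
    exact le_trans (htruth.2 x₁ x₂ x₂') hR
  · intro x
    have h := Stmt1Aux.tfm_between (f x) (min x.1 x.2) (max x.1 x.2)
    rwa [show (min x.1 x.2 + max x.1 x.2)/2 = (x.1 + x.2)/2 by rw [min_add_max]] at h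
  · intro x
    haveI := hprob x
    unfold egalCost
    apply Stmt1Aux.tfm_eq _ _ _ _
      (((continuous_id.sub continuous_const).abs).max
        ((continuous_id.sub continuous_const).abs))
      (Stmt1Aux.integrable_cost _ (hmom x) x.1 x.2)
    intro y hy
    exact Stmt1Aux.cost_combo hy
end

section
/- Let f be a deterministic learning-augmented mechanism for two agents on the line that receives a profile (x₁,x₂) ∈ ℝ² together with a prediction x̂₁ ∈ ℝ of agent 1's location, outputs a point f((x₁,x₂), x̂₁) ∈ ℝ, and is truthful for every fixed prediction. Then f is not better than 2-consistent: there exists a profile (x₁,x₂) with x₁ ≠ x₂ such that, with the accurate prediction x̂₁ = x₁, the output y = f((x₁,x₂), x₁) satisfies max(|y−x₁|, |y−x₂|) ≥ 2·opt(x₁,x₂). -/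
/-- no deterministic truthful mechanism for two agents on the line that is
augmented with a prediction of agent 1's location can be better than 2-consistent. -/
theorem stmt6 (f : ℝ × ℝ → ℝ → ℝ)
    (htruth1 : ∀ (p : ℝ) (x₁ x₂ x₁' : ℝ),
      |f (x₁, x₂) p - x₁| ≤ |f (x₁', x₂) p - x₁|)
    (htruth2 : ∀ (p : ℝ) (x₁ x₂ x₂' : ℝ),
      |f (x₁, x₂) p - x₂| ≤ |f (x₁, x₂') p - x₂|) :
    ∃ x₁ x₂ : ℝ, x₁ ≠ x₂ ∧
      2 * (|x₁ - x₂| / 2) ≤ max |f (x₁, x₂) x₁ - x₁| |f (x₁, x₂) x₁ - x₂| := by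
  by_cases hc : f (0, 0) 0 = 0
  · by_cases hs : f (0, 1) 0 = 0
    · refine ⟨0, 1, by norm_num, ?_⟩
      have : |f (0, 1) 0 - 1| = 1 := by rw [hs]; norm_num
      rw [this]
      have h1 : (2 : ℝ) * (|(0 : ℝ) - 1| / 2) = 1 := by norm_num
      rw [h1]
      exact le_max_right _ _
    · refine ⟨0, f (0, 1) 0, fun h => hs h.symm, ?_⟩
      -- agent 2 with true value s = f (0,1) 0 misreporting 1 gets s exactly
      have h1 := htruth2 0 0 (f (0, 1) 0) 1
      simp only [sub_self, abs_zero] at h1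
      have h2 : f (0, f (0, 1) 0) 0 = f (0, 1) 0 := by
        have := abs_nonpos_iff.mp h1
        linarith [sub_eq_zero.mp this]
      rw [h2]
      have h3 : (2 : ℝ) * (|(0 : ℝ) - f (0, 1) 0| / 2) = |f (0, 1) 0| := by
        rw [zero_sub, abs_neg]; ring
      rw [h3]
      have : |f (0, 1) 0 - 0| = |f (0, 1) 0| := by rw [sub_zero]
      rw [this]
      exact le_max_left _ _
  · refine ⟨0, f (0, 0) 0 / 2, fun h => hc (by linarith [h.symm ▸ h] : f (0,0) 0 = 0), ?_⟩
    -- agent 2 with true value 0 misreporting c/2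
    have h1 := htruth2 0 0 0 (f (0, 0) 0 / 2)
    simp only [sub_zero] at h1
    have h2 : (2 : ℝ) * (|(0 : ℝ) - f (0, 0) 0 / 2| / 2) ≤ |f (0, 0) 0| := by
      rw [zero_sub, abs_neg]
      have h3 : |f (0, 0) 0 / 2| = |f (0, 0) 0| / 2 := by rw [abs_div, abs_two]
      rw [h3]
      have := abs_nonneg (f (0, 0) 0)
      linarith
    calc 2 * (|(0 : ℝ) - f (0, 0) 0 / 2| / 2) ≤ |f (0, 0) 0| := h2
      _ ≤ |f (0, f (0, 0) 0 / 2) 0| := h1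
      _ = |f (0, f (0, 0) 0 / 2) 0 - 0| := by rw [sub_zero]
      _ ≤ _ := le_max_left _ _
end

section
/- Fix n ≥ 2 and let f be a randomized mechanism for n agents in the Euclidean plane that is truthful in expectation. Then f has approximation ratio at least √5/2 ≈ 1.118 for the egalitarian social cost: there exists a profile x ∈ (ℝ²)ⁿ with opt(x) > 0 such that C(f,x) ≥ (√5/2)·opt(x). -/
open MeasureTheory

noncomputable section Stmt9Aux

local notation "E2" => EuclideanSpace ℝ (Fin 2)

private lemma s9_sqrt5_pos : (0:ℝ) < Real.sqrt 5 := Real.sqrt_pos.mpr (by norm_num)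

/-- midpoint bound: distance to the center is at most the max of distances to the ends. -/
private lemma s9_dist_mid_le (c v y : E2) :
    dist y c ≤ max (dist y (c - v)) (dist y (c + v)) := by
  have h2 : (y - (c - v)) + (y - (c + v)) = (2:ℝ) • (y - c) := by
    rw [two_smul]; abel
  have h3 : ‖(y - (c - v)) + (y - (c + v))‖ = 2 * ‖y - c‖ := by
    rw [h2, norm_smul]; norm_num
  have h4 := norm_add_le (y - (c - v)) (y - (c + v))
  rw [h3] at h4
  simp only [dist_eq_norm]
  have l := le_max_left ‖y - (c - v)‖ ‖y - (c + v)‖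
  have r := le_max_right ‖y - (c - v)‖ ‖y - (c + v)‖
  linarith

/-- pointwise key estimate. -/
private lemma s9_pt_key (c v y : E2) (hv : ‖v‖ = 2) :
    (dist y c + 4) / Real.sqrt 5 ≤ max (dist y (c - v)) (dist y (c + v)) := by
  set a := dist y (c - v) with ha
  set b := dist y (c + v) with hb
  set d := dist y c with hd
  have hpar : a ^ 2 + b ^ 2 = 2 * d ^ 2 + 8 := by
    have h1 : y - (c - v) = (y - c) + v := by abel
    have h2 : y - (c + v) = (y - c) - v := by abel
    have hp := parallelogram_law_with_norm ℝ (y - c) v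
    simp only [ha, hb, hd, dist_eq_norm, h1, h2, hv] at *
    nlinarith [hp]
  have ha0 : 0 ≤ a := dist_nonneg
  have hb0 : 0 ≤ b := dist_nonneg
  have hd0 : 0 ≤ d := dist_nonneg
  have hm : 0 ≤ max a b := le_trans ha0 (le_max_left _ _)
  have ha2 : a ^ 2 ≤ (max a b) ^ 2 := pow_le_pow_left₀ ha0 (le_max_left a b) 2
  have hb2 : b ^ 2 ≤ (max a b) ^ 2 := pow_le_pow_left₀ hb0 (le_max_right a b) 2
  have h5 : (Real.sqrt 5) ^ 2 = 5 := Real.sq_sqrt (by norm_num)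
  have hsq : (d + 4) ^ 2 ≤ (Real.sqrt 5 * max a b) ^ 2 := by
    rw [mul_pow, h5]
    nlinarith [hpar, ha2, hb2, sq_nonneg (d - 1)]
  have hfin : d + 4 ≤ Real.sqrt 5 * max a b := by
    have h0 : 0 ≤ Real.sqrt 5 * max a b := mul_nonneg (Real.sqrt_nonneg _) hm
    calc d + 4 = Real.sqrt ((d + 4) ^ 2) := (Real.sqrt_sq (by linarith)).symm
      _ ≤ Real.sqrt ((Real.sqrt 5 * max a b) ^ 2) := Real.sqrt_le_sqrt hsq
      _ = Real.sqrt 5 * max a b := Real.sqrt_sq h0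
  rw [div_le_iff₀ s9_sqrt5_pos]
  linarith

private lemma s9_int_dist (μ : Measure E2) [IsProbabilityMeasure μ]
    (h : Integrable (fun y => ‖y‖) μ) (c : E2) :
    Integrable (fun y => dist y c) μ := by
  refine (h.add (integrable_const ‖c‖)).mono'
    ((continuous_id.dist continuous_const).aestronglyMeasurable) ?_
  filter_upwards with y
  rw [Real.norm_eq_abs, abs_of_nonneg dist_nonneg]
  calc dist y c ≤ dist y 0 + dist (0:E2) c := dist_triangle y 0 c
    _ = ‖y‖ + ‖c‖ := by rw [dist_zero_right, dist_zero_left]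

private lemma s9_int_max (μ : Measure E2) [IsProbabilityMeasure μ]
    (h : Integrable (fun y => ‖y‖) μ) (A B : E2) :
    Integrable (fun y => max (dist y A) (dist y B)) μ := by
  refine (h.add (integrable_const (‖A‖ + ‖B‖))).mono'
    (((continuous_id.dist continuous_const).max
      (continuous_id.dist continuous_const)).aestronglyMeasurable) ?_
  filter_upwards with y
  rw [Real.norm_eq_abs, abs_of_nonneg (le_trans dist_nonneg (le_max_left _ _))]
  have hA : dist y A ≤ ‖y‖ + ‖A‖ := by
    calc dist y A ≤ dist y 0 + dist (0:E2) A := dist_triangle y 0 A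
      _ = ‖y‖ + ‖A‖ := by rw [dist_zero_right, dist_zero_left]
  have hB : dist y B ≤ ‖y‖ + ‖B‖ := by
    calc dist y B ≤ dist y 0 + dist (0:E2) B := dist_triangle y 0 B
      _ = ‖y‖ + ‖B‖ := by rw [dist_zero_right, dist_zero_left]
  have h0A : 0 ≤ ‖A‖ := norm_nonneg _
  have h0B : 0 ≤ ‖B‖ := norm_nonneg _
  refine max_le ?_ ?_ <;> simp only [Pi.add_apply] <;> linarith

private lemma s9_sup_eq_max {n : ℕ} [Nonempty (Fin n)] (x : Fin n → E2) (A B : E2)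
    (hle : ∀ i y, dist y (x i) ≤ max (dist y A) (dist y B))
    (iA iB : Fin n) (hA : x iA = A) (hB : x iB = B) (y : E2) :
    (⨆ i, dist y (x i)) = max (dist y A) (dist y B) := by
  refine le_antisymm (ciSup_le fun i => hle i y) (max_le ?_ ?_)
  · rw [← hA]; exact le_ciSup (Finite.bddAbove_range fun i => dist y (x i)) iA
  · rw [← hB]; exact le_ciSup (Finite.bddAbove_range fun i => dist y (x i)) iB

private lemma s9_main_aux {n : ℕ} [Nonempty (Fin n)] (x' : Fin n → E2)
    (μ : Measure E2) [IsProbabilityMeasure μ]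
    (hmom : Integrable (fun y => ‖y‖) μ)
    (c v : E2) (hv : ‖v‖ = 2)
    (h1 : 1 ≤ ∫ y, dist y c ∂μ)
    (hsup : ∀ y, (⨆ i, dist y (x' i)) = max (dist y (c - v)) (dist y (c + v))) :
    0 < (⨅ y : E2, ⨆ i, dist y (x' i)) ∧
      Real.sqrt 5 / 2 * (⨅ y : E2, ⨆ i, dist y (x' i)) ≤ ∫ y, (⨆ i, dist y (x' i)) ∂μ := by
  have hABdist : dist (c - v) (c + v) = 4 := by
    rw [dist_eq_norm]
    have h : (c - v) - (c + v) = -((2:ℝ) • v) := by rw [two_smul]; abel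
    rw [h, norm_neg, norm_smul, hv]; norm_num
  have hlow : ∀ y : E2, (2:ℝ) ≤ ⨆ i, dist y (x' i) := by
    intro y
    rw [hsup y]
    have ht := dist_triangle (c - v) y (c + v)
    rw [hABdist, dist_comm (c - v) y] at ht
    have l := le_max_left (dist y (c - v)) (dist y (c + v))
    have r := le_max_right (dist y (c - v)) (dist y (c + v))
    linarith
  have hinf_lb : (2:ℝ) ≤ ⨅ y : E2, ⨆ i, dist y (x' i) := le_ciInf hlow
  have hbdd : BddBelow (Set.range fun y : E2 => ⨆ i, dist y (x' i)) :=
    ⟨2, by rintro _ ⟨y, rfl⟩; exact hlow y⟩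
  have hinf_ub : (⨅ y : E2, ⨆ i, dist y (x' i)) ≤ 2 := by
    have h := ciInf_le hbdd c
    rw [hsup c] at h
    have e1 : dist c (c - v) = 2 := by
      rw [dist_eq_norm]
      have hc : c - (c - v) = v := by abel
      rw [hc, hv]
    have e2 : dist c (c + v) = 2 := by
      rw [dist_eq_norm]
      have hc : c - (c + v) = -v := by abel
      rw [hc, norm_neg, hv]
    rw [e1, e2, max_self] at h
    exact h
  have hintd : Integrable (fun y => dist y c) μ := s9_int_dist μ hmom c
  have hintmax : Integrable (fun y => max (dist y (c - v)) (dist y (c + v))) μ :=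
    s9_int_max μ hmom _ _
  have hkey : Real.sqrt 5 ≤ ∫ y, max (dist y (c - v)) (dist y (c + v)) ∂μ := by
    have hmono : ∫ y, (dist y c + 4) / Real.sqrt 5 ∂μ
        ≤ ∫ y, max (dist y (c - v)) (dist y (c + v)) ∂μ := by
      refine integral_mono ((hintd.add (integrable_const 4)).div_const _) hintmax ?_
      exact fun y => s9_pt_key c v y hv
    have hval : ∫ y, (dist y c + 4) / Real.sqrt 5 ∂μ
        = ((∫ y, dist y c ∂μ) + 4) / Real.sqrt 5 := by
      rw [integral_div, integral_add hintd (integrable_const 4), integral_const]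
      simp [measure_univ]
    have h5le : Real.sqrt 5 ≤ ((∫ y, dist y c ∂μ) + 4) / Real.sqrt 5 := by
      rw [le_div_iff₀ s9_sqrt5_pos, Real.mul_self_sqrt (by norm_num)]
      linarith
    linarith [hmono, hval, h5le]
  refine ⟨by linarith, ?_⟩
  have heq : ∫ y, (⨆ i, dist y (x' i)) ∂μ
      = ∫ y, max (dist y (c - v)) (dist y (c + v)) ∂μ :=
    integral_congr_ae (Filter.Eventually.of_forall fun y => hsup y)
  rw [heq]
  have h2 : Real.sqrt 5 / 2 * (⨅ y : E2, ⨆ i, dist y (x' i)) ≤ Real.sqrt 5 / 2 * 2 :=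
    mul_le_mul_of_nonneg_left hinf_ub (by positivity)
  calc Real.sqrt 5 / 2 * (⨅ y : E2, ⨆ i, dist y (x' i)) ≤ Real.sqrt 5 / 2 * 2 := h2
    _ = Real.sqrt 5 := by ring
    _ ≤ _ := hkey

end Stmt9Aux

open MeasureTheory

/-- any randomized truthful-in-expectation mechanism for `n ≥ 2` agents in
the Euclidean plane has approximation ratio at least `√5/2 ≈ 1.118` for the egalitarian
social cost. Here `opt x = ⨅ y, ⨆ i, dist y (x i)` is the radius of the minimum
enclosing circle, and the cost of the mechanism is `∫ y, ⨆ i, dist y (x i) ∂(f x)`. -/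
theorem stmt9 (n : ℕ) (hn : 2 ≤ n)
    (f : (Fin n → EuclideanSpace ℝ (Fin 2)) → Measure (EuclideanSpace ℝ (Fin 2)))
    (hprob : ∀ x, IsProbabilityMeasure (f x))
    (hmom : ∀ x, Integrable (fun y => ‖y‖) (f x))
    (htruth : ∀ (x : Fin n → EuclideanSpace ℝ (Fin 2)) (i : Fin n)
        (x' : EuclideanSpace ℝ (Fin 2)),
      ∫ y, dist y (x i) ∂(f x) ≤ ∫ y, dist y (x i) ∂(f (Function.update x i x'))) :
    ∃ x : Fin n → EuclideanSpace ℝ (Fin 2),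
      0 < (⨅ y : EuclideanSpace ℝ (Fin 2), ⨆ i, dist y (x i)) ∧
      (Real.sqrt 5 / 2) * (⨅ y : EuclideanSpace ℝ (Fin 2), ⨆ i, dist y (x i))
        ≤ ∫ y, (⨆ i, dist y (x i)) ∂(f x) := by
  haveI : Nonempty (Fin n) := ⟨⟨0, by omega⟩⟩
  set e : EuclideanSpace ℝ (Fin 2) := EuclideanSpace.single 0 (2:ℝ) with he_def
  have he : ‖e‖ = 2 := by
    rw [he_def, EuclideanSpace.norm_single]; norm_num
  set i0 : Fin n := ⟨0, by omega⟩ with hi0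
  set i1 : Fin n := ⟨1, by omega⟩ with hi1
  have hne : i1 ≠ i0 := by simp [hi0, hi1, Fin.ext_iff]
  set x : Fin n → EuclideanSpace ℝ (Fin 2) := fun i => if i = i0 then 0 else e with hx
  haveI := hprob x
  have hd0 : Integrable (fun y => dist y (0 : EuclideanSpace ℝ (Fin 2))) (f x) := by
    simpa [dist_zero_right] using hmom x
  have hde : Integrable (fun y => dist y e) (f x) := s9_int_dist _ (hmom x) e
  have hptsum : ∀ y : EuclideanSpace ℝ (Fin 2), (2:ℝ) ≤ dist y 0 + dist y e := by
    intro y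
    have ht := dist_triangle (0 : EuclideanSpace ℝ (Fin 2)) y e
    rw [dist_comm (0 : EuclideanSpace ℝ (Fin 2)) y] at ht
    have h0e : dist (0 : EuclideanSpace ℝ (Fin 2)) e = 2 := by rw [dist_zero_left, he]
    linarith
  have hsum : (2:ℝ) ≤ (∫ y, dist y (0 : EuclideanSpace ℝ (Fin 2)) ∂ f x)
      + ∫ y, dist y e ∂ f x := by
    calc (2:ℝ) = ∫ _, (2:ℝ) ∂ f x := by simp
      _ ≤ ∫ y, (dist y 0 + dist y e) ∂ f x :=
        integral_mono (integrable_const 2) (hd0.add hde) hptsum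
      _ = _ := integral_add hd0 hde
  rcases le_or_gt 1 (∫ y, dist y (0 : EuclideanSpace ℝ (Fin 2)) ∂ f x) with hc | hc
  · -- agent i0 (at 0) deviates to -e; center 0, v = e
    set x' := Function.update x i0 (-e) with hx'
    haveI := hprob x'
    have h1 : 1 ≤ ∫ y, dist y (0 : EuclideanSpace ℝ (Fin 2)) ∂ f x' := by
      have ht := htruth x i0 (-e)
      have hx0 : x i0 = 0 := by simp [hx]
      rw [hx0] at ht
      linarith
    have hvA : x' i0 = (0 : EuclideanSpace ℝ (Fin 2)) - e := by
      rw [hx', Function.update_self, zero_sub]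
    have hvB : x' i1 = (0 : EuclideanSpace ℝ (Fin 2)) + e := by
      simp [hx', Function.update_of_ne hne, hx, hne]
    have hle : ∀ (i : Fin n) (y : EuclideanSpace ℝ (Fin 2)), dist y (x' i)
        ≤ max (dist y ((0 : EuclideanSpace ℝ (Fin 2)) - e))
              (dist y ((0 : EuclideanSpace ℝ (Fin 2)) + e)) := by
      intro i y
      by_cases h : i = i0
      · rw [h, hvA]; exact le_max_left _ _
      · have hv : x' i = (0 : EuclideanSpace ℝ (Fin 2)) + e := by
          simp [hx', Function.update_of_ne h, hx, h]
        rw [hv]; exact le_max_right _ _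
    have hsup := s9_sup_eq_max x' _ _ hle i0 i1 hvA hvB
    obtain ⟨p1, p2⟩ := s9_main_aux x' (f x') (hmom x') 0 e he h1 hsup
    exact ⟨x', p1, p2⟩
  · -- agent i1 (at e) deviates to e + e; center e, v = e
    have hce : 1 ≤ ∫ y, dist y e ∂ f x := by linarith
    set x' := Function.update x i1 (e + e) with hx'
    haveI := hprob x'
    have h1 : 1 ≤ ∫ y, dist y e ∂ f x' := by
      have ht := htruth x i1 (e + e)
      have hx1 : x i1 = e := by simp [hx, hne]
      rw [hx1] at ht
      linarith
    have hvA : x' i0 = e - e := by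
      simp [hx', Function.update_of_ne (Ne.symm hne), hx]
    have hvB : x' i1 = e + e := by
      rw [hx', Function.update_self]
    have hle : ∀ (i : Fin n) (y : EuclideanSpace ℝ (Fin 2)), dist y (x' i)
        ≤ max (dist y (e - e)) (dist y (e + e)) := by
      intro i y
      by_cases h : i = i1
      · rw [h, hvB]; exact le_max_right _ _
      · by_cases h0 : i = i0
        · rw [h0, hvA]; exact le_max_left _ _
        · have hv : x' i = e := by
            simp [hx', Function.update_of_ne h, hx, h0]
          rw [hv]
          exact s9_dist_mid_le e e y
    have hsup := s9_sup_eq_max x' _ _ hle i0 i1 hvA hvB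
    obtain ⟨p1, p2⟩ := s9_main_aux x' (f x') (hmom x') e e he h1 hsup
    exact ⟨x', p1, p2⟩
end

section
/- Let a, b ∈ ℝ², let m = (a+b)/2 be their midpoint, let c = ‖a−b‖/2, and let μ be a Borel probability measure on ℝ² with finite first moments. Then ∫ max(‖y−a‖, ‖y−b‖) dμ(y) ≥ √( (∫ ‖y−m‖ dμ(y))² + c² ). In particular, if a randomized facility location has expected distance at least Δ from the midpoint of two agents at distance 2c, then its expected egalitarian social cost for these two agents is at least √(Δ² + c²). -/
set_option maxHeartbeats 800000


open MeasureTheory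

lemma key_pointwise (a b y : EuclideanSpace ℝ (Fin 2)) (s t : ℝ) (hs : 0 ≤ s) (ht : 0 ≤ t)
    (hst : s ^ 2 + t ^ 2 = 1) :
    s * dist y (midpoint ℝ a b) + t * (dist a b / 2) ≤ max (dist y a) (dist y b) := by
  set m := midpoint ℝ a b with hm
  set h := dist y m with hh
  set c := dist a b / 2 with hc
  set M := max (dist y a) (dist y b) with hM
  have hda : dist y a ≤ M := le_max_left _ _
  have hdb : dist y b ≤ M := le_max_right _ _
  have hMnn : 0 ≤ M := le_trans dist_nonneg hda
  have hhnn : 0 ≤ h := dist_nonneg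
  have hcnn : 0 ≤ c := by have := dist_nonneg (x := a) (y := b); rw [hc]; linarith
  -- parallelogram identity
  have hsum : (y - a) + (y - b) = (2:ℝ) • (y - m) := by
    rw [hm, midpoint_eq_smul_add, invOf_eq_inv]
    module
  have hpar := parallelogram_law_with_norm ℝ (y - a) (y - b)
  have hdiff : (y - a) - (y - b) = b - a := by abel
  rw [hsum, hdiff, norm_smul] at hpar
  have hnorm2 : ‖(2:ℝ)‖ = 2 := by norm_num
  rw [hnorm2] at hpar
  have e1 : ‖y - a‖ = dist y a := (dist_eq_norm _ _).symm
  have e2 : ‖y - b‖ = dist y b := (dist_eq_norm _ _).symm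
  have e3 : ‖y - m‖ = h := (dist_eq_norm _ _).symm
  have e4 : ‖b - a‖ = dist a b := by rw [← dist_eq_norm, dist_comm]
  rw [e1, e2, e3, e4] at hpar
  have hdab : dist a b = 2 * c := by rw [hc]; ring
  rw [hdab] at hpar
  -- h^2 + c^2 ≤ M^2
  have h1 : h ^ 2 + c ^ 2 ≤ M ^ 2 := by nlinarith [dist_nonneg (x := y) (y := a), dist_nonneg (x := y) (y := b)]
  -- Cauchy-Schwarz
  have h2 : (s * h + t * c) ^ 2 ≤ h ^ 2 + c ^ 2 := by nlinarith [sq_nonneg (s * c - t * h)]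
  have h3 : (s * h + t * c) ^ 2 ≤ M ^ 2 := le_trans h2 h1
  have hlnn : 0 ≤ s * h + t * c := by positivity
  nlinarith

/-- for two agents at `a` and `b` in the Euclidean plane with midpoint
`m = (a+b)/2` and `c = ‖a-b‖/2`, the expected egalitarian social cost of any randomized
facility location `μ` is at least `√(Δ² + c²)`, where `Δ` is the expected distance of
the facility from the midpoint. -/
theorem stmt10 (a b : EuclideanSpace ℝ (Fin 2))
    (μ : Measure (EuclideanSpace ℝ (Fin 2)))
    (hprob : IsProbabilityMeasure μ) (hmom : Integrable (fun y => ‖y‖) μ) :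
    Real.sqrt ((∫ y, dist y (midpoint ℝ a b) ∂μ) ^ 2 + (dist a b / 2) ^ 2)
      ≤ ∫ y, max (dist y a) (dist y b) ∂μ := by
  set m := midpoint ℝ a b with hm
  set c := dist a b / 2 with hc
  have hcnn : 0 ≤ c := by have := dist_nonneg (x := a) (y := b); rw [hc]; linarith
  -- integrability helpers
  have hint : ∀ z : EuclideanSpace ℝ (Fin 2), Integrable (fun y => dist y z) μ := by
    intro z
    apply Integrable.mono' (hmom.add (integrable_const ‖z‖))
    · exact (continuous_id.dist continuous_const).aestronglyMeasurable
    · filter_upwards with y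
      simp only [Pi.add_apply, Real.norm_eq_abs, abs_of_nonneg dist_nonneg, dist_eq_norm]
      rw [abs_norm]; exact norm_sub_le y z
  have hintmax : Integrable (fun y => max (dist y a) (dist y b)) μ := by
    have := (hint a).sup (hint b)
    simpa [Pi.sup_def] using this
  set X := ∫ y, dist y m ∂μ with hX
  have hXnn : 0 ≤ X := integral_nonneg fun y => dist_nonneg
  set D := Real.sqrt (X ^ 2 + c ^ 2) with hD
  have hDnn : 0 ≤ D := Real.sqrt_nonneg _
  rcases eq_or_lt_of_le hDnn with hD0 | hDpos
  · rw [← hD0]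
    exact integral_nonneg fun y => le_max_iff.mpr (Or.inl dist_nonneg)
  · have hD2 : D ^ 2 = X ^ 2 + c ^ 2 := Real.sq_sqrt (by positivity)
    set s := X / D with hs
    set t := c / D with hts
    have hsnn : 0 ≤ s := div_nonneg hXnn hDnn
    have htnn : 0 ≤ t := div_nonneg hcnn hDnn
    have hst : s ^ 2 + t ^ 2 = 1 := by
      rw [hs, hts, div_pow, div_pow, ← add_div, ← hD2, div_self (by positivity)]
    have hmono : ∫ y, (s * dist y m + t * c) ∂μ ≤ ∫ y, max (dist y a) (dist y b) ∂μ := by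
      apply integral_mono (((hint m).const_mul s).add (integrable_const (t * c))) hintmax
      intro y
      exact key_pointwise a b y s t hsnn htnn hst
    have heq : ∫ y, (s * dist y m + t * c) ∂μ = s * X + t * c := by
      rw [integral_add ((hint m).const_mul s) (integrable_const (t * c)),
        integral_const_mul, integral_const]
      simp [hX]
    have : s * X + t * c = D := by
      rw [hs, hts]
      field_simp
      nlinarith [hD2]
    linarith [hmono, heq ▸ hmono]
end

section
/- Let f be a randomized learning-augmented mechanism for two agents in the Euclidean plane that receives a profile x ∈ (ℝ²)² together with a prediction x̂ ∈ (ℝ²)² of both agents' locations, and that is truthful in expectation for every fixed prediction. If f is 1-consistent, i.e., C(f(x,x),x) ≤ opt(x) for every profile x, then f cannot be better than 2-robust: there exist a profile x with opt(x) > 0 and a prediction x̂ such that C(f(x,x̂),x) ≥ 2·opt(x). -/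
open MeasureTheory

lemma integrable_dist_const' {μ : Measure (EuclideanSpace ℝ (Fin 2))}
    (hfin : IsFiniteMeasure μ)
    (h : Integrable (fun y => ‖y‖) μ) (c : EuclideanSpace ℝ (Fin 2)) :
    Integrable (fun y => dist y c) μ := by
  haveI := hfin
  have hy : Integrable (fun y : EuclideanSpace ℝ (Fin 2) => y) μ :=
    (integrable_norm_iff aestronglyMeasurable_id).mp h
  simpa [dist_eq_norm] using (hy.sub (integrable_const c)).norm

/-- no randomized learning-augmented mechanism for two agents in the
Euclidean plane, augmented with a prediction of both agents' locations, that is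
truthful in expectation for every fixed prediction and 1-consistent, can be better
than 2-robust. -/
theorem stmt13
    (f : EuclideanSpace ℝ (Fin 2) × EuclideanSpace ℝ (Fin 2) →
      EuclideanSpace ℝ (Fin 2) × EuclideanSpace ℝ (Fin 2) →
      Measure (EuclideanSpace ℝ (Fin 2)))
    (hprob : ∀ x p, IsProbabilityMeasure (f x p))
    (hmom : ∀ x p, Integrable (fun y => ‖y‖) (f x p))
    (htruth1 : ∀ (p : EuclideanSpace ℝ (Fin 2) × EuclideanSpace ℝ (Fin 2))
        (x₁ x₂ x₁' : EuclideanSpace ℝ (Fin 2)),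
      ∫ y, dist y x₁ ∂(f (x₁, x₂) p) ≤ ∫ y, dist y x₁ ∂(f (x₁', x₂) p))
    (htruth2 : ∀ (p : EuclideanSpace ℝ (Fin 2) × EuclideanSpace ℝ (Fin 2))
        (x₁ x₂ x₂' : EuclideanSpace ℝ (Fin 2)),
      ∫ y, dist y x₂ ∂(f (x₁, x₂) p) ≤ ∫ y, dist y x₂ ∂(f (x₁, x₂') p))
    (hcons : ∀ x : EuclideanSpace ℝ (Fin 2) × EuclideanSpace ℝ (Fin 2),
      ∫ y, max (dist y x.1) (dist y x.2) ∂(f x x) ≤ dist x.1 x.2 / 2) :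
    ∃ x p : EuclideanSpace ℝ (Fin 2) × EuclideanSpace ℝ (Fin 2),
      0 < dist x.1 x.2 / 2 ∧
      2 * (dist x.1 x.2 / 2) ≤ ∫ y, max (dist y x.1) (dist y x.2) ∂(f x p) := by
  classical
  set e : EuclideanSpace ℝ (Fin 2) := EuclideanSpace.single 0 (1:ℝ) with he_def
  have he : ‖e‖ = 1 := by simp [he_def]
  set a : EuclideanSpace ℝ (Fin 2) := 0 with ha_def
  set b : EuclideanSpace ℝ (Fin 2) := e with hb_def
  set m : EuclideanSpace ℝ (Fin 2) := (1/2 : ℝ) • e with hm_def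
  have dab : dist a b = 1 := by
    simp [ha_def, hb_def, dist_eq_norm, he]
    rw [← hb_def]; exact he
  have dmb : dist m b = 1/2 := by
    have h1 : m - b = (-(1/2) : ℝ) • e := by rw [hm_def, hb_def]; module
    rw [dist_eq_norm, h1, norm_smul, he]
    norm_num
  have dma : ∀ y : EuclideanSpace ℝ (Fin 2), dist y m = ‖y - m‖ := fun y => dist_eq_norm y m
  -- Step A: the mechanism on the prediction profile is concentrated at m
  set μ : Measure (EuclideanSpace ℝ (Fin 2)) := f (a, b) (a, b) with hμ_def
  haveI : IsProbabilityMeasure μ := hprob _ _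
  have hia : Integrable (fun y => dist y a) μ := integrable_dist_const' (by infer_instance) (hmom _ _) a
  have hib : Integrable (fun y => dist y b) μ := integrable_dist_const' (by infer_instance) (hmom _ _) b
  have him : Integrable (fun y => dist y m) μ := integrable_dist_const' (by infer_instance) (hmom _ _) m
  have himax : Integrable (fun y => max (dist y a) (dist y b)) μ := by
    exact hia.sup hib
  have hg0 : ∀ y, (0:ℝ) ≤ max (dist y a) (dist y b) - 1/2 := by
    intro y
    have h1 : dist a b ≤ dist y a + dist y b := dist_triangle_left a b y
    have h2 : dist y a ≤ max (dist y a) (dist y b) := le_max_left _ _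
    have h3 : dist y b ≤ max (dist y a) (dist y b) := le_max_right _ _
    rw [dab] at h1; linarith
  have hgi : Integrable (fun y => max (dist y a) (dist y b) - 1/2) μ :=
    himax.sub (integrable_const _)
  have hgint : ∫ y, (max (dist y a) (dist y b) - 1/2) ∂μ = 0 := by
    have h1 : ∫ y, (max (dist y a) (dist y b) - 1/2) ∂μ
        = (∫ y, max (dist y a) (dist y b) ∂μ) - 1/2 := by
      rw [integral_sub himax (integrable_const _), integral_const]
      simp
    have h2 := hcons (a, b)
    rw [dab] at h2
    have h3 : (0:ℝ) ≤ ∫ y, (max (dist y a) (dist y b) - 1/2) ∂μ :=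
      integral_nonneg hg0
    simp only at h2
    linarith [h1, h2, h3]
  have hae : (fun y => max (dist y a) (dist y b) - 1/2) =ᵐ[μ] 0 :=
    (integral_eq_zero_iff_of_nonneg hg0 hgi).mp hgint
  have hkey : ∀ y : EuclideanSpace ℝ (Fin 2),
      max (dist y a) (dist y b) - 1/2 = 0 → dist y m = 0 := by
    intro y hy
    have hya : dist y a ≤ 1/2 := by
      have := le_max_left (dist y a) (dist y b); linarith
    have hyb : dist y b ≤ 1/2 := by
      have := le_max_right (dist y a) (dist y b); linarith
    have hpar := parallelogram_law_with_norm ℝ (y - m) (m - a)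
    have e1 : (y - m) + (m - a) = y - a := by abel
    have e2 : (y - m) - (m - a) = y - b := by
      rw [ha_def, hb_def, hm_def]; module
    rw [e1, e2] at hpar
    have hma : ‖m - a‖ = 1/2 := by
      have : m - a = (1/2 : ℝ) • e := by rw [ha_def, hm_def]; module
      rw [this, norm_smul, he]; norm_num
    rw [hma] at hpar
    rw [dist_eq_norm] at hya hyb
    have hna : (0:ℝ) ≤ ‖y - a‖ := norm_nonneg _
    have hnb : (0:ℝ) ≤ ‖y - b‖ := norm_nonneg _
    have hnm : ‖y - m‖ = 0 := by nlinarith [norm_nonneg (y - m)]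
    rw [dist_eq_norm, hnm]
  have hzero : ∫ y, dist y m ∂μ = 0 := by
    have : (fun y => dist y m) =ᵐ[μ] 0 := by
      filter_upwards [hae] with y hy
      exact hkey y hy
    rw [integral_congr_ae this]; simp
  -- Step B: truthfulness forces the mechanism on ((m,b),(a,b)) to sit at m
  set ν : Measure (EuclideanSpace ℝ (Fin 2)) := f (m, b) (a, b) with hν_def
  haveI : IsProbabilityMeasure ν := hprob _ _
  have hνm : Integrable (fun y => dist y m) ν := integrable_dist_const' (by infer_instance) (hmom _ _) m
  have hνb : Integrable (fun y => dist y b) ν := integrable_dist_const' (by infer_instance) (hmom _ _) b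
  have hνmax : Integrable (fun y => max (dist y m) (dist y b)) ν := by
    exact hνm.sup hνb
  have htr := htruth1 (a, b) m b a
  rw [← hν_def, ← hμ_def, hzero] at htr
  have hν0 : ∫ y, dist y m ∂ν = 0 :=
    le_antisymm htr (integral_nonneg fun y => dist_nonneg)
  -- Step C: conclude
  refine ⟨(m, b), (a, b), ?_, ?_⟩
  · simp only [dmb]; norm_num
  · simp only
    have h1 : ∫ y, (1/2 - dist y m) ∂ν ≤ ∫ y, dist y b ∂ν := by
      apply integral_mono ((integrable_const _).sub hνm) hνb
      intro y
      have h := dist_triangle m y b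
      rw [dist_comm m y] at h
      simp only [Pi.sub_apply]
      linarith [h, dmb]
    have h2 : ∫ y, (1/2 - dist y m) ∂ν = 1/2 := by
      rw [integral_sub (integrable_const _) hνm, integral_const, hν0]
      simp
    have h3 : ∫ y, dist y b ∂ν ≤ ∫ y, max (dist y m) (dist y b) ∂ν := by
      apply integral_mono hνb hνmax
      intro y; exact le_max_right _ _
    rw [dmb]
    linarith
end

section
/- Let p₁, p₂, p₃, O ∈ ℝ² and R > 0 satisfy ‖pᵢ − O‖ = R for i = 1, 2, 3, and suppose O lies in the convex hull of {p₁, p₂, p₃}. Then the centroid G = (p₁+p₂+p₃)/3 satisfies ‖G − O‖ ≤ R/3. -/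
set_option maxHeartbeats 1000000

/-- if `p₁, p₂, p₃` lie on the circle of center `O` and radius `R > 0` in
the Euclidean plane, and `O` lies in the convex hull of `{p₁, p₂, p₃}`, then their
centroid `G = (p₁+p₂+p₃)/3` satisfies `‖G - O‖ ≤ R/3`. -/
theorem stmt17 (p₁ p₂ p₃ O : EuclideanSpace ℝ (Fin 2)) (R : ℝ) (hR : 0 < R)
    (h₁ : dist p₁ O = R) (h₂ : dist p₂ O = R) (h₃ : dist p₃ O = R)
    (hO : O ∈ convexHull ℝ {p₁, p₂, p₃}) :
    dist ((3⁻¹ : ℝ) • (p₁ + p₂ + p₃)) O ≤ R / 3 := by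
  -- extract a convex combination
  obtain ⟨a, b, c, ha, hb, hc, habc, hcomb⟩ :
      ∃ a b c : ℝ, 0 ≤ a ∧ 0 ≤ b ∧ 0 ≤ c ∧ a + b + c = 1 ∧
        a • p₁ + b • p₂ + c • p₃ = O := by
    rw [show ({p₁, p₂, p₃} : Set (EuclideanSpace ℝ (Fin 2))) = insert p₁ {p₂, p₃} from rfl,
      convexHull_insert ⟨p₂, by simp⟩, mem_convexJoin] at hO
    obtain ⟨w, hw, z, hz, hseg⟩ := hO
    rw [Set.mem_singleton_iff] at hw
    subst hw
    rw [convexHull_pair] at hz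
    obtain ⟨u, v, hu, hv, huv, rfl⟩ := hz
    obtain ⟨t, s, ht, hs, hts, hO⟩ := hseg
    exact ⟨t, s * u, s * v, ht, mul_nonneg hs hu, mul_nonneg hs hv,
      by nlinarith, by rw [← hO, smul_add, smul_smul, smul_smul, add_assoc]⟩
  -- coordinates of the translated points
  set x1 := p₁ 0 - O 0 with hx1
  set y1 := p₁ 1 - O 1 with hy1
  set x2 := p₂ 0 - O 0 with hx2
  set y2 := p₂ 1 - O 1 with hy2
  set x3 := p₃ 0 - O 0 with hx3
  set y3 := p₃ 1 - O 1 with hy3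
  clear_value x1 y1 x2 y2 x3 y3
  -- norm equations
  have hsq : ∀ p : EuclideanSpace ℝ (Fin 2), dist p O = R →
      (p 0 - O 0) ^ 2 + (p 1 - O 1) ^ 2 = R ^ 2 := by
    intro p hp
    have : dist p O ^ 2 = R ^ 2 := by rw [hp]
    rw [EuclideanSpace.dist_eq, Real.sq_sqrt (by positivity)] at this
    simp only [Fin.sum_univ_two, Real.dist_eq, sq_abs] at this
    linarith
  have g1 : x1 ^ 2 + y1 ^ 2 = R ^ 2 := by rw [hx1, hy1]; exact hsq p₁ h₁
  have g2 : x2 ^ 2 + y2 ^ 2 = R ^ 2 := by rw [hx2, hy2]; exact hsq p₂ h₂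
  have g3 : x3 ^ 2 + y3 ^ 2 = R ^ 2 := by rw [hx3, hy3]; exact hsq p₃ h₃
  -- the convex combination, in coordinates
  have e1 : a * x1 + b * x2 + c * x3 = 0 := by
    have h0 := congrArg (fun v : EuclideanSpace ℝ (Fin 2) => v 0) hcomb
    simp only [PiLp.add_apply, PiLp.smul_apply, smul_eq_mul] at h0
    simp only [hx1, hx2, hx3]
    linear_combination h0 - O 0 * habc
  have e2 : a * y1 + b * y2 + c * y3 = 0 := by
    have h0 := congrArg (fun v : EuclideanSpace ℝ (Fin 2) => v 1) hcomb
    simp only [PiLp.add_apply, PiLp.smul_apply, smul_eq_mul] at h0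
    simp only [hy1, hy2, hy3]
    linear_combination h0 - O 1 * habc
  -- key determinant relations
  have hk1 : a * (x1 * y2 - x2 * y1) = c * (x2 * y3 - x3 * y2) := by
    linear_combination y2 * e1 - x2 * e2
  have hk2 : a * (x1 * y3 - x3 * y1) = -(b * (x2 * y3 - x3 * y2)) := by
    linear_combination y3 * e1 - x3 * e2
  have key2 : a ^ 3 * ((x1 * y2 - x2 * y1) * (x1 * y3 - x3 * y1)) =
      -(a * b * c * (x2 * y3 - x3 * y2) ^ 2) := by
    linear_combination (a ^ 2 * (x1 * y3 - x3 * y1)) * hk1 +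
      (a * c * (x2 * y3 - x3 * y2)) * hk2
  have hq : a * ((x1 * y2 - x2 * y1) * (x1 * y3 - x3 * y1)) ≤ 0 := by
    rcases eq_or_lt_of_le ha with h | h
    · rw [← h]; simp
    · nlinarith [key2, mul_pos h h, mul_nonneg (mul_nonneg (mul_nonneg ha hb) hc)
        (sq_nonneg (x2 * y3 - x3 * y2))]
  -- the master identity
  have key : R ^ 2 * ((x1 + x2 + x3) ^ 2 + (y1 + y2 + y3) ^ 2) =
      R ^ 4 + 4 * (a * ((x1 * y2 - x2 * y1) * (x1 * y3 - x3 * y1))) := by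
    linear_combination
      (R ^ 2 - 2 * a * R ^ 2 - 2 * a * (x2 * x3 + y2 * y3)) * g1 +
      (R ^ 2 - 2 * b * R ^ 2 - 2 * b * (x1 * x3 + y1 * y3)) * g2 +
      (R ^ 2 - 2 * c * R ^ 2 - 2 * c * (x1 * x2 + y1 * y2)) * g3 +
      ((2 * R ^ 2 - 2 * (x2 * x3 + y2 * y3)) * x1 +
        (2 * R ^ 2 + 2 * (x1 * x3 + y1 * y3)) * x2 +
        (2 * R ^ 2 + 2 * (x1 * x2 + y1 * y2)) * x3) * e1 +
      ((2 * R ^ 2 - 2 * (x2 * x3 + y2 * y3)) * y1 +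
        (2 * R ^ 2 + 2 * (x1 * x3 + y1 * y3)) * y2 +
        (2 * R ^ 2 + 2 * (x1 * x2 + y1 * y2)) * y3) * e2 +
      (-2 * R ^ 2 * (R ^ 2 + (x1 * x2 + y1 * y2) + (x1 * x3 + y1 * y3) +
        (x2 * x3 + y2 * y3))) * habc
  have hW : (x1 + x2 + x3) ^ 2 + (y1 + y2 + y3) ^ 2 ≤ R ^ 2 := by
    nlinarith [key, hq, hR, mul_pos hR hR]
  -- conclude
  rw [EuclideanSpace.dist_eq, Fin.sum_univ_two]
  simp only [Real.dist_eq, sq_abs]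
  have hcoord : ((3⁻¹ : ℝ) • (p₁ + p₂ + p₃)) 0 - O 0 = 3⁻¹ * (x1 + x2 + x3) := by
    simp only [PiLp.smul_apply, PiLp.add_apply, smul_eq_mul, hx1, hx2, hx3]; ring
  have hcoord' : ((3⁻¹ : ℝ) • (p₁ + p₂ + p₃)) 1 - O 1 = 3⁻¹ * (y1 + y2 + y3) := by
    simp only [PiLp.smul_apply, PiLp.add_apply, smul_eq_mul, hy1, hy2, hy3]; ring
  rw [hcoord, hcoord']
  have h9 : (3⁻¹ * (x1 + x2 + x3)) ^ 2 + (3⁻¹ * (y1 + y2 + y3)) ^ 2 ≤ (R / 3) ^ 2 := by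
    have : (3⁻¹ * (x1 + x2 + x3)) ^ 2 + (3⁻¹ * (y1 + y2 + y3)) ^ 2 =
        ((x1 + x2 + x3) ^ 2 + (y1 + y2 + y3) ^ 2) / 9 := by ring
    rw [this]
    have : (R / 3) ^ 2 = R ^ 2 / 9 := by ring
    rw [this]
    linarith
  calc Real.sqrt ((3⁻¹ * (x1 + x2 + x3)) ^ 2 + (3⁻¹ * (y1 + y2 + y3)) ^ 2)
      ≤ Real.sqrt ((R / 3) ^ 2) := Real.sqrt_le_sqrt h9
    _ = R / 3 := Real.sqrt_sq (by positivity)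
end
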